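/- Let C be a Banach chain complex. Then Hₙ(C) = 0 for all n if and only if Hⁿ(C') = 0 for all n, where C' is the dual Banach cochain complex. -/

import Mathlib

set_option maxHeartbeats 1000000

lemma sep_from_closed_submodule {Y : Type*} [NormedAddCommGroup Y] [NormedSpace ℝ Y]
    (S : Submodule ℝ Y) (hS : IsClosed (S : Set Y)) {x : Y} (hx : x ∉ S) :
    ∃ f : Y →L[ℝ] ℝ, (∀ s ∈ S, f s = 0) ∧ f x ≠ 0 := by
  obtain ⟨f, u, hfs, hux⟩ := geometric_hahn_banach_closed_point S.convex hS hx
  have hu : 0 < u := by simpa using hfs 0 S.zero_mem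
  refine ⟨f, fun s hs => ?_, (hu.trans hux).ne'⟩
  by_contra hfs0
  have h1 := hfs (((u + 1) / f s) • s) (S.smul_mem _ hs)
  rw [map_smul, smul_eq_mul, div_mul_cancel₀ _ hfs0] at h1
  linarith


open ContinuousLinearMap

lemma fwd_aux {X Y : Type*} [NormedAddCommGroup X] [NormedSpace ℝ X] [CompleteSpace X]
    [NormedAddCommGroup Y] [NormedSpace ℝ Y] [CompleteSpace Y]
    (T : X →L[ℝ] Y) (Z : Submodule ℝ Y)
    (hZc : IsClosed (Z : Set Y)) (hTZ : ∀ x, T x ∈ Z)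
    (hsurj : ∀ y ∈ Z, ∃ x, T x = y)
    (f : X →L[ℝ] ℝ) (hker : ∀ x, T x = 0 → f x = 0) :
    ∃ g : Y →L[ℝ] ℝ, f = g.comp T := by
  haveI : CompleteSpace Z := hZc.completeSpace_coe
  set T' : X →L[ℝ] Z := T.codRestrict Z hTZ with hT'
  have hsurj' : Function.Surjective T' := by
    rintro ⟨y, hy⟩
    obtain ⟨x, hx⟩ := hsurj y hy
    exact ⟨x, Subtype.ext hx⟩
  obtain ⟨K, Kpos, hK⟩ := T'.exists_preimage_norm_le hsurj'
  choose s hs1 hs2 using hK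
  have key : ∀ (x : X) (z : Z), T' x = z → f x = f (s z) := by
    intro x z hxz
    have h0 : T (x - s z) = 0 := by
      have h1 : T' (x - s z) = 0 := by rw [map_sub, hxz, hs1 z, sub_self]
      have h2 := congrArg (Subtype.val) h1
      exact h2
    have h3 := hker _ h0
    rw [map_sub] at h3
    linarith
  set g₀lin : Z →ₗ[ℝ] ℝ :=
    { toFun := fun z => f (s z)
      map_add' := fun z w => by
        have h : T' (s z + s w) = z + w := by rw [map_add, hs1, hs1]
        show f (s (z + w)) = f (s z) + f (s w)
        rw [← key _ _ h, map_add]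
      map_smul' := fun c z => by
        have h : T' (c • s z) = c • z := by rw [map_smul, hs1]
        show f (s (c • z)) = (RingHom.id ℝ) c • f (s z)
        rw [← key _ _ h, map_smul, smul_eq_mul, RingHom.id_apply, smul_eq_mul] }
  have hbound : ∀ z : Z, ‖g₀lin z‖ ≤ (K * ‖f‖) * ‖z‖ := by
    intro z
    calc ‖f (s z)‖ ≤ ‖f‖ * ‖s z‖ := f.le_opNorm _
      _ ≤ ‖f‖ * (K * ‖z‖) := by
          exact mul_le_mul_of_nonneg_left (hs2 z) (norm_nonneg f)
      _ = (K * ‖f‖) * ‖z‖ := by ring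
  set g₀ : Z →L[ℝ] ℝ := g₀lin.mkContinuous (K * ‖f‖) hbound
  obtain ⟨g, hg, -⟩ := exists_extension_norm_eq Z g₀
  refine ⟨g, ?_⟩
  ext x
  have h4 : g (T x) = g₀ (T' x) := hg (T' x)
  have h5 : g₀ (T' x) = f (s (T' x)) := rfl
  have h6 : f x = f (s (T' x)) := key x (T' x) rfl
  simp only [comp_apply]
  rw [h4, h5, ← h6]


lemma bwd_aux {X Y : Type*} [NormedAddCommGroup X] [NormedSpace ℝ X] [CompleteSpace X]
    [NormedAddCommGroup Y] [NormedSpace ℝ Y] [CompleteSpace Y]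
    (T : X →L[ℝ] Y) (y : Y)
    (hdense : ∀ f : Y →L[ℝ] ℝ, (∀ x, f (T x) = 0) → f y = 0)
    (hlift : ∀ f : X →L[ℝ] ℝ, (∀ k, T k = 0 → f k = 0) →
      ∃ g : Y →L[ℝ] ℝ, ∀ x, f x = g (T x)) :
    ∃ b, T b = y := by
  classical
  set N : Submodule ℝ X := T.ker with hN
  haveI : IsClosed (N : Set X) := ContinuousLinearMap.isClosed_ker T
  -- the induced map on the quotient
  have hle : N ≤ LinearMap.ker (T : X →ₗ[ℝ] Y) := le_rfl
  set Tbarlin : (X ⧸ N) →ₗ[ℝ] Y := N.liftQ (T : X →ₗ[ℝ] Y) hle with hTbarlin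
  have hTbarmk : ∀ m : X, Tbarlin (Submodule.Quotient.mk m) = T m := fun m => rfl
  have hTbarbound : ∀ q : X ⧸ N, ‖Tbarlin q‖ ≤ ‖T‖ * ‖q‖ := by
    intro q
    refine le_of_forall_pos_le_add ?_
    intro δ hδ
    have hε : (0:ℝ) < δ / (‖T‖ + 1) := by positivity
    obtain ⟨m, hm, hmn⟩ := Submodule.Quotient.norm_mk_lt q hε
    have h1 : ‖Tbarlin q‖ ≤ ‖T‖ * ‖m‖ := by rw [← hm, hTbarmk]; exact T.le_opNorm m
    have h2 : ‖T‖ * ‖m‖ ≤ ‖T‖ * (‖q‖ + δ / (‖T‖ + 1)) :=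
      mul_le_mul_of_nonneg_left hmn.le (norm_nonneg T)
    have h3 : ‖T‖ * (δ / (‖T‖ + 1)) ≤ δ := by
      rw [mul_div_assoc']
      rw [div_le_iff₀ (by positivity)]
      nlinarith [norm_nonneg T]
    nlinarith [norm_nonneg T]
  set Tbar : (X ⧸ N) →L[ℝ] Y := Tbarlin.mkContinuous ‖T‖ hTbarbound with hTbar
  set mkCLM : X →L[ℝ] (X ⧸ N) :=
    LinearMap.mkContinuous N.mkQ 1
      (fun m => by simpa using Submodule.Quotient.norm_mk_le N m) with hmkCLM
  set Φ : (Y →L[ℝ] ℝ) →L[ℝ] ((X ⧸ N) →L[ℝ] ℝ) :=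
    (ContinuousLinearMap.compL ℝ (X ⧸ N) Y ℝ).flip Tbar with hΦdef
  have hΦ : ∀ (g : Y →L[ℝ] ℝ) (q : X ⧸ N), Φ g q = g (Tbar q) := fun g q => rfl
  have hΦsurj : Function.Surjective Φ := by
    intro φ
    have hvan : ∀ k, T k = 0 → (φ.comp mkCLM) k = 0 := by
      intro k hk
      have hk0 : mkCLM k = 0 := by
        show N.mkQ k = 0
        rw [Submodule.mkQ_apply]
        exact (Submodule.Quotient.mk_eq_zero N).2 (LinearMap.mem_ker.2 hk)
      simp [comp_apply, hk0]
    obtain ⟨g, hg⟩ := hlift (φ.comp mkCLM) hvan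
    refine ⟨g, ?_⟩
    ext q
    obtain ⟨m, rfl⟩ := Submodule.Quotient.mk_surjective N q
    have h1 : Φ g (Submodule.Quotient.mk m) = g (T m) := by
      rw [hΦ]
      congr 1
    have h2 : φ (Submodule.Quotient.mk m) = (φ.comp mkCLM) m := rfl
    rw [h1, h2, hg m]
  obtain ⟨K, Kpos, hK⟩ := @ContinuousLinearMap.exists_preimage_norm_le ℝ ℝ _ _ (RingHom.id ℝ)
    (Y →L[ℝ] ℝ) _ _ ((X ⧸ N) →L[ℝ] ℝ) _ _ Φ _ _ _ _ (surj := hΦsurj) _ _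
  have hquot : ∀ x : X, ‖(Submodule.Quotient.mk x : X ⧸ N)‖ ≤ K * ‖T x‖ := by
    intro x
    refine NormedSpace.norm_le_dual_bound ℝ _ (by positivity) ?_
    intro φ
    obtain ⟨g, hg, hgnorm⟩ := hK φ
    have h1 : φ (Submodule.Quotient.mk x) = g (T x) := by
      rw [← hg, hΦ, hTbar]
      congr 1
    rw [h1]
    calc ‖g (T x)‖ ≤ ‖g‖ * ‖T x‖ := g.le_opNorm _
      _ ≤ (K * ‖φ‖) * ‖T x‖ := mul_le_mul_of_nonneg_right hgnorm (norm_nonneg _)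
      _ = (K * ‖T x‖) * ‖φ‖ := by ring
  -- now the controlled surjectivity onto the range
  set F : NormedAddGroupHom X Y :=
    AddMonoidHom.mkNormedAddGroupHom (T : X →ₗ[ℝ] Y).toAddMonoidHom ‖T‖
      (fun v => T.le_opNorm v) with hF
  have hFapp : ∀ v, F v = T v := fun v => rfl
  set Kgrp : AddSubgroup Y := (LinearMap.range (T : X →ₗ[ℝ] Y)).toAddSubgroup with hKgrp
  have hsurjW : F.SurjectiveOnWith Kgrp (K + 1) := by
    intro h hh
    obtain ⟨x, hx⟩ := hh
    by_cases h0 : h = 0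
    · exact ⟨0, by simp [h0, hFapp], by simp [h0]⟩
    · have hpos : 0 < ‖h‖ := norm_pos_iff.2 h0
      obtain ⟨m, hm, hmn⟩ := Submodule.Quotient.norm_mk_lt (Submodule.Quotient.mk x : X ⧸ N) hpos
      have hmem : m - x ∈ N := (Submodule.Quotient.eq N).1 hm
      have hTm : F m = h := by
        rw [hFapp]
        have : T (m - x) = 0 := hmem
        rw [map_sub, sub_eq_zero] at this
        rw [this]
        exact hx
      refine ⟨m, hTm, ?_⟩
      have hq := hquot x
      have hTx : T x = h := hx
      rw [hTx] at hq
      calc ‖m‖ ≤ ‖(Submodule.Quotient.mk x : X ⧸ N)‖ + ‖h‖ := hmn.le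
        _ ≤ K * ‖h‖ + ‖h‖ := by linarith
        _ = (K + 1) * ‖h‖ := by ring
  have hy : y ∈ Kgrp.topologicalClosure := by
    have hyS : y ∈ (LinearMap.range (T : X →ₗ[ℝ] Y)).topologicalClosure := by
      by_contra hyS
      obtain ⟨f, hf0, hfy⟩ := sep_from_closed_submodule _
        (Submodule.isClosed_topologicalClosure _) hyS
      exact hfy (hdense f fun x => hf0 _
        (Submodule.le_topologicalClosure _ (LinearMap.mem_range_self _ x)))
    have h2 : y ∈ (Kgrp.topologicalClosure : Set Y) := by
      rw [AddSubgroup.topologicalClosure_coe]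
      have h3 : y ∈ closure ((LinearMap.range (T : X →ₗ[ℝ] Y)) : Set Y) := by
        rw [← Submodule.topologicalClosure_coe]
        exact hyS
      exact h3
    exact h2
  obtain ⟨b, hb, -⟩ := controlled_closure_of_complete
    (show (0:ℝ) < K + 1 by positivity) one_pos hsurjW y hy
  exact ⟨b, hb⟩

/-- Cycles of a chain complex indexed over ℕ: in degree 0 every chain is a cycle,
in degree `n+1` the cycles are the kernel of `∂ₙ₊₁ = d n`. -/
def IsCycle (C : ℕ → Type*) [∀ n, NormedAddCommGroup (C n)] [∀ n, NormedSpace ℝ (C n)]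
    (d : ∀ n, C (n + 1) →L[ℝ] C n) : ∀ n, C n → Prop
  | 0, _ => True
  | (n + 1), x => d n x = 0

/-- Coboundaries of the dual cochain complex: in degree 0 only `0` is a coboundary,
in degree `n+1` the coboundaries are the functionals of the form `g ∘ ∂ₙ₊₁`. -/
def IsCobdry (C : ℕ → Type*) [∀ n, NormedAddCommGroup (C n)] [∀ n, NormedSpace ℝ (C n)]
    (d : ∀ n, C (n + 1) →L[ℝ] C n) : ∀ n, (C n →L[ℝ] ℝ) → Prop
  | 0, f => f = 0
  | (n + 1), f => ∃ g : C n →L[ℝ] ℝ, f = g.comp (d n)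

/-- Duality principle: for a Banach chain complex `C`, the homology
`Hₙ(C)` vanishes for all `n` iff the cohomology `Hⁿ(C')` of the dual complex
vanishes for all `n`. -/
theorem stmt2
    (C : ℕ → Type*) [∀ n, NormedAddCommGroup (C n)] [∀ n, NormedSpace ℝ (C n)]
    [∀ n, CompleteSpace (C n)]
    (d : ∀ n, C (n + 1) →L[ℝ] C n)
    (hdd : ∀ n x, d n (d (n + 1) x) = 0) :
    (∀ n x, IsCycle C d n x → ∃ b, d n b = x) ↔
    (∀ n (f : C n →L[ℝ] ℝ), f.comp (d n) = 0 → IsCobdry C d n f) := by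
  constructor
  · intro h n
    match n with
    | 0 =>
      intro f hf
      show f = 0
      ext x
      obtain ⟨b, hb⟩ := h 0 x trivial
      rw [← hb]
      have : f.comp (d 0) b = 0 := by rw [hf]; rfl
      simpa using this
    | (m + 1) =>
      intro f hf
      show ∃ g : C m →L[ℝ] ℝ, f = g.comp (d m)
      have hker : ∀ x, d m x = 0 → f x = 0 := by
        intro x hx
        obtain ⟨c, hc⟩ := h (m + 1) x hx
        rw [← hc]
        have : f.comp (d (m + 1)) c = 0 := by rw [hf]; rfl
        simpa using this
      match m with
      | 0 =>
        refine fwd_aux (d 0) ⊤ (by simp) (fun _ => Submodule.mem_top) ?_ f hker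
        exact fun y _ => h 0 y trivial
      | (k + 1) =>
        refine fwd_aux (d (k + 1)) ((d k).ker)
          (ContinuousLinearMap.isClosed_ker (d k)) (fun x => LinearMap.mem_ker.2 (hdd k x))
          ?_ f hker
        exact fun y hy => h (k + 1) y (LinearMap.mem_ker.1 hy)
  · intro h' n x hx
    refine bwd_aux (d n) x ?_ ?_
    · intro f hf0
      have hf : f.comp (d n) = 0 := by ext z; simpa using hf0 z
      have hco := h' n f hf
      clear hf hf0
      match n, x, hx, f, hco with
      | 0, x, _, f, hco => rw [show f = 0 from hco]; rfl
      | (m + 1), x, hx, f, ⟨g, hg⟩ =>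
        rw [hg]
        have hx' : d m x = 0 := hx
        simp [hx']
    · intro f hv
      have hf : f.comp (d (n + 1)) = 0 := by
        ext z
        simpa using hv (d (n + 1) z) (hdd n z)
      obtain ⟨g, hg⟩ := h' (n + 1) f hf
      exact ⟨g, fun x => by rw [hg]; rfl⟩
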